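/- Let z₁, …, zₙ ∈ ℂ, not all zero, satisfy (γ/n)(∑ₗ zₗ)² = ∑ₗ zₗ² with γ real, γ < 1. If n·∑ₗ|zₗ|² + (γ−2)·|∑ₗ zₗ|² = 0, then ∑ₗ zₗ ≠ 0, and after multiplying all zₗ by a suitable nonzero complex constant, one has zₗ = αₗ + i·β with αₗ real, β a nonzero real constant independent of ℓ, ∑ₗ αₗ = 0, and γ = 1 − (∑ₗ αₗ²)/(n·β²). -/

import Mathlib

theorem stmt11 (n : ℕ) (z : Fin n → ℂ) (hz : ¬ ∀ l, z l = 0)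
    (γ : ℝ) (hγ : γ < 1)
    (heq : ((γ : ℂ) / (n : ℂ)) * (∑ l, z l) ^ 2 = ∑ l, (z l) ^ 2)
    (hdeg : (n : ℝ) * ∑ l, Complex.normSq (z l)
        + (γ - 2) * Complex.normSq (∑ l, z l) = 0) :
    (∑ l, z l) ≠ 0 ∧
    ∃ lam : ℂ, lam ≠ 0 ∧ ∃ β : ℝ, β ≠ 0 ∧
      (∀ l, (lam * z l).im = β) ∧
      (∑ l, (lam * z l).re) = 0 ∧
      γ = 1 - (∑ l, (lam * z l).re ^ 2) / (n * β ^ 2) := by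
  classical
  have hn : 0 < n := by
    rcases Nat.eq_zero_or_pos n with h | h
    · subst h; exact absurd (fun l => l.elim0) hz
    · exact h
  have hnR : (n : ℝ) ≠ 0 := Nat.cast_ne_zero.mpr hn.ne'
  have hS : (∑ l, z l) ≠ 0 := by
    intro h0
    rw [h0] at hdeg
    simp at hdeg
    have hsum : ∑ l, Complex.normSq (z l) = 0 := by
      rcases hdeg with h | h
      · exact absurd h hn.ne'
      · exact h
    have hall := (Finset.sum_eq_zero_iff_of_nonneg
      (fun l _ => Complex.normSq_nonneg (z l))).mp hsum
    exact hz fun l => Complex.normSq_eq_zero.mp (hall l (Finset.mem_univ l))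
  set S := ∑ l, z l with hSdef
  set s : ℝ := ‖S‖ with hsdef
  have hs : 0 < s := by
    simpa [hsdef] using (norm_pos_iff.mpr hS)
  set lam : ℂ := Complex.I * (s : ℂ) / S with hlamdef
  have hsC : (s : ℂ) ≠ 0 := by exact_mod_cast hs.ne'
  have hlam : lam ≠ 0 := by
    rw [hlamdef]
    exact div_ne_zero (mul_ne_zero Complex.I_ne_zero hsC) hS
  have hlamS : lam * S = Complex.I * (s : ℂ) := by
    rw [hlamdef]; field_simp
  have hnlam : Complex.normSq lam = 1 := by
    have habs : ‖lam‖ = 1 := by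
      rw [hlamdef]
      rw [norm_div, norm_mul, Complex.norm_I, Complex.norm_real, Real.norm_eq_abs,
        abs_of_pos hs, ← hsdef]
      field_simp
    have := Complex.sq_norm lam
    rw [habs] at this
    simpa using this.symm
  set a : Fin n → ℝ := fun l => (lam * z l).re with hadef
  set b : Fin n → ℝ := fun l => (lam * z l).im with hbdef
  have hsumw : ∑ l, lam * z l = Complex.I * (s : ℂ) := by
    rw [← Finset.mul_sum, ← hSdef, hlamS]
  have hbsum : ∑ l, b l = s := by
    have := congrArg Complex.im hsumw
    simpa [Complex.im_sum, hbdef] using this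
  have hasum : ∑ l, a l = 0 := by
    have := congrArg Complex.re hsumw
    simpa [Complex.re_sum, hadef] using this
  -- sum of squares of normalized z
  have hw2 : ∑ l, (lam * z l) ^ 2 = -((γ : ℂ) * (s : ℂ) ^ 2 / (n : ℂ)) := by
    calc ∑ l, (lam * z l) ^ 2 = lam ^ 2 * ∑ l, (z l) ^ 2 := by
          rw [Finset.mul_sum]
          exact Finset.sum_congr rfl fun l _ => mul_pow _ _ _
      _ = lam ^ 2 * (((γ : ℂ) / (n : ℂ)) * S ^ 2) := by rw [← heq]
      _ = ((γ : ℂ) / (n : ℂ)) * (lam * S) ^ 2 := by ring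
      _ = ((γ : ℂ) / (n : ℂ)) * (Complex.I * (s : ℂ)) ^ 2 := by rw [hlamS]
      _ = -((γ : ℂ) * (s : ℂ) ^ 2 / (n : ℂ)) := by
          rw [mul_pow, Complex.I_sq]; ring
  have h1 : ∑ l, (a l ^ 2 - b l ^ 2) = -(γ * s ^ 2 / n) := by
    have := congrArg Complex.re hw2
    simp only [Complex.re_sum] at this
    have hre : ∀ l, ((lam * z l) ^ 2).re = a l ^ 2 - b l ^ 2 := by
      intro l
      simp [pow_two, Complex.mul_re, hadef, hbdef]
    rw [Finset.sum_congr rfl (fun l _ => hre l)] at this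
    rw [this,
      show -((γ:ℂ) * (s:ℂ) ^ 2 / (n:ℂ)) = ((-(γ * s ^ 2 / n) : ℝ) : ℂ) by
        push_cast; ring, Complex.ofReal_re]
  have hnormS : Complex.normSq S = s ^ 2 := by
    rw [← Complex.sq_norm, hsdef]
  have h2 : ∑ l, (a l ^ 2 + b l ^ 2) = (2 - γ) * s ^ 2 / n := by
    have hnz : ∀ l, a l ^ 2 + b l ^ 2 = Complex.normSq (z l) := by
      intro l
      have : Complex.normSq (lam * z l) = Complex.normSq (z l) := by
        rw [Complex.normSq_mul, hnlam, one_mul]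
      rw [← this]
      simp [Complex.normSq_apply, hadef, hbdef, pow_two]
    rw [Finset.sum_congr rfl (fun l _ => hnz l)]
    rw [hnormS] at hdeg
    field_simp
    linarith
  have hbsq : ∑ l, b l ^ 2 = s ^ 2 / n := by
    have hsub : ∑ l, ((a l ^ 2 + b l ^ 2) - (a l ^ 2 - b l ^ 2))
        = (2 - γ) * s ^ 2 / n - -(γ * s ^ 2 / n) := by
      rw [Finset.sum_sub_distrib, h1, h2]
    have h3 : ∑ l, 2 * b l ^ 2 = 2 * (s ^ 2 / n) := by
      calc ∑ l, 2 * b l ^ 2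
          = ∑ l, ((a l ^ 2 + b l ^ 2) - (a l ^ 2 - b l ^ 2)) :=
            Finset.sum_congr rfl fun l _ => by ring
        _ = (2 - γ) * s ^ 2 / n - -(γ * s ^ 2 / n) := hsub
        _ = 2 * (s ^ 2 / n) := by ring
    rw [← Finset.mul_sum] at h3
    linarith [h3]
  have hasq : ∑ l, a l ^ 2 = (1 - γ) * s ^ 2 / n := by
    have hadd : ∑ l, ((a l ^ 2 + b l ^ 2) + (a l ^ 2 - b l ^ 2))
        = (2 - γ) * s ^ 2 / n + -(γ * s ^ 2 / n) := by
      rw [Finset.sum_add_distrib, h1, h2]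
    have h3 : ∑ l, 2 * a l ^ 2 = 2 * ((1 - γ) * s ^ 2 / n) := by
      calc ∑ l, 2 * a l ^ 2
          = ∑ l, ((a l ^ 2 + b l ^ 2) + (a l ^ 2 - b l ^ 2)) :=
            Finset.sum_congr rfl fun l _ => by ring
        _ = (2 - γ) * s ^ 2 / n + -(γ * s ^ 2 / n) := hadd
        _ = 2 * ((1 - γ) * s ^ 2 / n) := by ring
    rw [← Finset.mul_sum] at h3
    linarith [h3]
  -- all imaginary parts equal s / n
  have hb : ∀ l, b l = s / n := by
    have key : ∑ l, (b l - s / n) ^ 2 = 0 := by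
      have expand : ∑ l, (b l - s / n) ^ 2
          = (∑ l, b l ^ 2) - 2 * (s / n) * (∑ l, b l) + n * (s / n) ^ 2 := by
        have : ∀ l, (b l - s / n) ^ 2
            = b l ^ 2 - 2 * (s / n) * b l + (s / n) ^ 2 := fun l => by ring
        rw [Finset.sum_congr rfl (fun l _ => this l)]
        rw [Finset.sum_add_distrib, Finset.sum_sub_distrib, ← Finset.mul_sum,
          Finset.sum_const, Finset.card_univ, Fintype.card_fin, nsmul_eq_mul]
      rw [expand, hbsq, hbsum]
      field_simp
      ring
    intro l
    have := (Finset.sum_eq_zero_iff_of_nonneg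
      (fun l _ => sq_nonneg (b l - s / n))).mp key l (Finset.mem_univ l)
    have := pow_eq_zero_iff (n := 2) (by norm_num) |>.mp this
    linarith [this]
  refine ⟨hS, lam, hlam, s / n, ?_, hb, hasum, ?_⟩
  · positivity
  · rw [show (∑ l, (lam * z l).re ^ 2) = ∑ l, a l ^ 2 from rfl, hasq]
    field_simp
    ring
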